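/- Let n ≥ 1 and k ≥ 1 be natural numbers. For every x = (x_1,…,x_n) ∈ [-1,1]^n, Σ_{i ∈ Z_k^n} Σ_{j=1}^n |i_j/k - x_j| · g_n(k·x - i) ≤ n/(2k), where the outer sum runs over all integer vectors i = (i_1,…,i_n) with each |i_j| ≤ k. -/

import Mathlib

/-- The tent function `g₁(x) = max{1 - |x|, 0}`. -/
noncomputable def g1 (x : ℝ) : ℝ := max (1 - |x|) 0

/-- The product tent function `gₙ(x) = ∏ⱼ g₁(xⱼ)`. -/
noncomputable def gn {n : ℕ} (x : Fin n → ℝ) : ℝ := ∏ j, g1 (x j)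

lemma g1_nonneg (x : ℝ) : 0 ≤ g1 x := le_max_right _ _

lemma g1_eq_zero {x : ℝ} (h : 1 ≤ |x|) : g1 x = 0 := max_eq_right (by linarith)

lemma g1_vanish (y : ℝ) {m : ℤ} (h1 : m ≠ ⌊y⌋) (h2 : m ≠ ⌊y⌋ + 1) :
    g1 (y - m) = 0 := by
  have hf1 : (⌊y⌋ : ℝ) ≤ y := Int.floor_le y
  have hf2 : y < ⌊y⌋ + 1 := Int.lt_floor_add_one y
  apply g1_eq_zero
  have : m ≤ ⌊y⌋ - 1 ∨ ⌊y⌋ + 2 ≤ m := by omega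
  rcases this with h | h
  · have : (m : ℝ) ≤ (⌊y⌋ : ℝ) - 1 := by exact_mod_cast h
    rw [abs_of_nonneg (by linarith)]; linarith
  · have : (⌊y⌋ : ℝ) + 2 ≤ (m : ℝ) := by exact_mod_cast h
    rw [abs_of_nonpos (by linarith)]; linarith

lemma sum_restrict (k : ℕ) (y : ℝ) (f : ℤ → ℝ)
    (hz : ∀ m, m ≠ ⌊y⌋ → m ≠ ⌊y⌋ + 1 → f m = 0) (hnn : ∀ m, 0 ≤ f m) :
    ∑ m ∈ Finset.Icc (-(k : ℤ)) k, f m ≤ f ⌊y⌋ + f (⌊y⌋ + 1) := by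
  classical
  set P : Finset ℤ := {⌊y⌋, ⌊y⌋ + 1} with hP
  have h1 : ∑ m ∈ Finset.Icc (-(k : ℤ)) k, f m
      = ∑ m ∈ Finset.Icc (-(k : ℤ)) k ∩ P, f m := by
    refine (Finset.sum_subset Finset.inter_subset_left ?_).symm
    intro m hm hm'
    have : m ∉ P := fun h => hm' (Finset.mem_inter.2 ⟨hm, h⟩)
    simp only [hP, Finset.mem_insert, Finset.mem_singleton, not_or] at this
    exact hz m this.1 this.2
  have h2 : ∑ m ∈ Finset.Icc (-(k : ℤ)) k ∩ P, f m ≤ ∑ m ∈ P, f m :=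
    Finset.sum_le_sum_of_subset_of_nonneg Finset.inter_subset_right
      (fun m _ _ => hnn m)
  have h3 : ∑ m ∈ P, f m = f ⌊y⌋ + f (⌊y⌋ + 1) :=
    Finset.sum_pair (by omega)
  linarith

lemma g1_floor (y : ℝ) : g1 (y - ⌊y⌋) = 1 - (y - ⌊y⌋) := by
  have hf1 : (⌊y⌋ : ℝ) ≤ y := Int.floor_le y
  have hf2 : y < ⌊y⌋ + 1 := Int.lt_floor_add_one y
  unfold g1
  rw [abs_of_nonneg (by linarith)]
  exact max_eq_left (by linarith)

lemma g1_floor_succ (y : ℝ) : g1 (y - (⌊y⌋ + 1)) = y - ⌊y⌋ := by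
  have hf1 : (⌊y⌋ : ℝ) ≤ y := Int.floor_le y
  have hf2 : y < ⌊y⌋ + 1 := Int.lt_floor_add_one y
  unfold g1
  rw [abs_of_nonpos (by linarith)]
  rw [max_eq_left (by linarith)]
  ring

/-- Partition of unity style bound. -/
lemma sum_g1_le_one (k : ℕ) (y : ℝ) :
    ∑ m ∈ Finset.Icc (-(k : ℤ)) k, g1 (y - m) ≤ 1 := by
  have := sum_restrict k y (fun m => g1 (y - m))
    (fun m h1 h2 => g1_vanish y h1 h2) (fun m => g1_nonneg _)
  have e1 : g1 (y - ⌊y⌋) = 1 - (y - ⌊y⌋) := g1_floor y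
  have e2 : g1 (y - (⌊y⌋ + 1 : ℤ)) = y - ⌊y⌋ := by
    push_cast
    exact g1_floor_succ y
  simp only [e1] at this
  rw [e2] at this
  linarith

/-- One-dimensional moment bound. -/
lemma sum_moment_le (k : ℕ) (hk : 1 ≤ k) (x : ℝ) :
    ∑ m ∈ Finset.Icc (-(k : ℤ)) k, |(m : ℝ) / k - x| * g1 (k * x - m)
      ≤ 1 / (2 * k) := by
  have hk' : (0 : ℝ) < k := by exact_mod_cast hk
  set y : ℝ := k * x with hy
  have hf1 : (⌊y⌋ : ℝ) ≤ y := Int.floor_le y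
  have hf2 : y < ⌊y⌋ + 1 := Int.lt_floor_add_one y
  have := sum_restrict k y (fun m => |(m : ℝ) / k - x| * g1 (y - m))
    (fun m h1 h2 => by simp [g1_vanish y h1 h2])
    (fun m => mul_nonneg (abs_nonneg _) (g1_nonneg _))
  set t : ℝ := y - ⌊y⌋ with ht
  have ht0 : 0 ≤ t := by rw [ht]; linarith
  have ht1 : t < 1 := by rw [ht]; linarith
  have hx' : x = y / k := by rw [hy]; field_simp
  have e1 : g1 (y - ⌊y⌋) = 1 - t := g1_floor y
  have e2 : g1 (y - (⌊y⌋ + 1 : ℤ)) = t := by push_cast; exact g1_floor_succ y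
  have a1 : |(⌊y⌋ : ℝ) / k - x| = t / k := by
    have h' : (⌊y⌋ : ℝ) / k - x = -(t / k) := by rw [hx', ht]; ring
    rw [h', abs_neg, abs_of_nonneg (div_nonneg ht0 hk'.le)]
  have a2 : |((⌊y⌋ + 1 : ℤ) : ℝ) / k - x| = (1 - t) / k := by
    have h' : ((⌊y⌋ + 1 : ℤ) : ℝ) / k - x = (1 - t) / k := by
      push_cast; rw [hx', ht]; ring
    rw [h', abs_of_nonneg (div_nonneg (by linarith) hk'.le)]
  simp only [e1, a1] at this
  rw [e2, a2] at this
  have hbound : t / k * (1 - t) + (1 - t) / k * t ≤ 1 / (2 * k) := by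
    rw [div_mul_eq_mul_div, div_mul_eq_mul_div, ← add_div, div_le_div_iff₀ (by positivity) (by positivity)]
    nlinarith [sq_nonneg (2 * t - 1)]
  rw [show g1 t = 1 - t from e1] at this
  linarith

/-- **Lemma 5, equation (II).** For `x ∈ [-1,1]ⁿ`,
`∑_{i ∈ Z_kⁿ} ∑_{j=1}ⁿ |i_j/k - x_j| · gₙ(kx - i) ≤ n / (2k)`. -/
theorem gn_moment_estimate (n k : ℕ) (hn : 1 ≤ n) (hk : 1 ≤ k)
    (x : Fin n → ℝ) (hx : x ∈ Set.Icc (fun _ => (-1 : ℝ)) (fun _ => 1)) :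
    ∑ i ∈ Fintype.piFinset (fun _ : Fin n => Finset.Icc (-(k : ℤ)) k),
        ∑ j, |(i j : ℝ) / k - x j| * gn (fun j' => k * x j' - i j')
      ≤ n / (2 * k) := by
  classical
  have hk' : (0 : ℝ) < k := by exact_mod_cast hk
  rw [Finset.sum_comm]
  have key : ∀ j : Fin n,
      ∑ i ∈ Fintype.piFinset (fun _ : Fin n => Finset.Icc (-(k : ℤ)) k),
        |(i j : ℝ) / k - x j| * gn (fun j' => k * x j' - i j') ≤ 1 / (2 * k) := by
    intro j
    set h : Fin n → ℤ → ℝ := fun j' a =>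
      (if j' = j then |(a : ℝ) / k - x j| else 1) * g1 (k * x j' - a) with hh
    have step1 : ∀ i : Fin n → ℤ,
        |(i j : ℝ) / k - x j| * gn (fun j' => k * x j' - i j')
          = ∏ j', h j' (i j') := by
      intro i
      unfold gn
      rw [hh]
      rw [Finset.prod_mul_distrib]
      congr 1
      rw [Finset.prod_ite_eq' Finset.univ j (fun j' => |(i j' : ℝ) / k - x j|)]
      simp
    simp only [step1]
    rw [← Finset.prod_univ_sum]
    have hle : ∏ j', ∑ a ∈ Finset.Icc (-(k : ℤ)) k, h j' a
        ≤ ∏ j' : Fin n, (if j' = j then 1 / (2 * (k : ℝ)) else 1) := by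
      apply Finset.prod_le_prod
      · intro j' _
        apply Finset.sum_nonneg
        intro a _
        apply mul_nonneg _ (g1_nonneg _)
        split <;> [exact abs_nonneg _; norm_num]
      · intro j' _
        by_cases hj : j' = j
        · subst hj
          simp only [hh, if_pos rfl]
          exact sum_moment_le k hk (x j')
        · simp only [hh, if_neg hj, one_mul]
          exact sum_g1_le_one k (k * x j')
    calc ∏ j', ∑ a ∈ Finset.Icc (-(k : ℤ)) k, h j' a
        ≤ ∏ j' : Fin n, (if j' = j then 1 / (2 * (k : ℝ)) else 1) := hle
      _ = 1 / (2 * k) := by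
          rw [Finset.prod_ite_eq' Finset.univ j (fun _ => 1 / (2 * k : ℝ))]
          simp
  calc ∑ j, ∑ i ∈ Fintype.piFinset (fun _ : Fin n => Finset.Icc (-(k : ℤ)) k),
        |(i j : ℝ) / k - x j| * gn (fun j' => k * x j' - i j')
      ≤ ∑ _j : Fin n, 1 / (2 * (k : ℝ)) := Finset.sum_le_sum (fun j _ => key j)
    _ = n / (2 * k) := by
        rw [Finset.sum_const, Finset.card_univ, Fintype.card_fin, nsmul_eq_mul]
        ring
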